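/- A vector z* ∈ ℝ^N maximizes f over ℝ^N if and only if z* maximizes W over ℝ^N. -/

import Mathlib

/-- `G^n(Y^n | z, a^n, b^n) = G^n((exp(a_i − b_i (z + c_i)))_{i ∈ V_n})` where the
partition `V_n = {i | part i = n}`. -/
noncomputable def GzP (m N : ℕ) (part : Fin m → Fin N)
    (Gn : ∀ n : Fin N, ({i : Fin m // part i = n} → ℝ) → ℝ)
    (c : Fin m → ℝ) (n : Fin N) (z : ℝ)
    (ab : ({i : Fin m // part i = n} → ℝ) × ({i : Fin m // part i = n} → ℝ)) : ℝ :=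
  Gn n fun i => Real.exp (ab.1 i - ab.2 i * (z + c i.1))

/-- `ĝ_n(z) = min_{(a^n, b^n) ∈ A^n} G^n(Y^n | z, a^n, b^n)`. -/
noncomputable def ghatP (m N : ℕ) (part : Fin m → Fin N)
    (Gn : ∀ n : Fin N, ({i : Fin m // part i = n} → ℝ) → ℝ)
    (c : Fin m → ℝ)
    (An : ∀ n : Fin N,
      Set (({i : Fin m // part i = n} → ℝ) × ({i : Fin m // part i = n} → ℝ)))
    (n : Fin N) (z : ℝ) : ℝ :=
  sInf (GzP m N part Gn c n z '' An n)

/-- `ρ(z, a, b)` for a full parameter profile `ab = ((a^n, b^n))_n`. -/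
noncomputable def rhoP (m N : ℕ) (part : Fin m → Fin N)
    (Gn : ∀ n : Fin N, ({i : Fin m // part i = n} → ℝ) → ℝ)
    (c : Fin m → ℝ) (z : Fin N → ℝ)
    (ab : ∀ n : Fin N,
      ({i : Fin m // part i = n} → ℝ) × ({i : Fin m // part i = n} → ℝ)) : ℝ :=
  (∑ n, z n * GzP m N part Gn c n (z n) (ab n)) /
    (1 + ∑ n, GzP m N part Gn c n (z n) (ab n))

/-- Robust objective `f(z) = min_{(a,b) ∈ A} ρ(z, a, b)` with `A = A^1 × ⋯ × A^N`. -/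
noncomputable def fP (m N : ℕ) (part : Fin m → Fin N)
    (Gn : ∀ n : Fin N, ({i : Fin m // part i = n} → ℝ) → ℝ)
    (c : Fin m → ℝ)
    (An : ∀ n : Fin N,
      Set (({i : Fin m // part i = n} → ℝ) × ({i : Fin m // part i = n} → ℝ)))
    (z : Fin N → ℝ) : ℝ :=
  sInf (rhoP m N part Gn c z ''
    {ab : ∀ n : Fin N,
        ({i : Fin m // part i = n} → ℝ) × ({i : Fin m // part i = n} → ℝ) |
      ∀ n, ab n ∈ An n})

/-- Reduced objective `W(z) = (Σ_n z_n ĝ_n(z_n)) / (1 + Σ_l ĝ_l(z_l))`. -/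
noncomputable def WP (m N : ℕ) (part : Fin m → Fin N)
    (Gn : ∀ n : Fin N, ({i : Fin m // part i = n} → ℝ) → ℝ)
    (c : Fin m → ℝ)
    (An : ∀ n : Fin N,
      Set (({i : Fin m // part i = n} → ℝ) × ({i : Fin m // part i = n} → ℝ)))
    (z : Fin N → ℝ) : ℝ :=
  (∑ n, z n * ghatP m N part Gn c An n (z n)) /
    (1 + ∑ l, ghatP m N part Gn c An l (z l))


/-- Euler positivity: a degree-one positively homogeneous `C²` function with positive
partial derivatives is positive on the positive orthant (nonempty index type). -/
lemma euler_pos {ι : Type*} [Fintype ι] [Nonempty ι] [DecidableEq ι]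
    (G : (ι → ℝ) → ℝ)
    (hsm : ContDiffOn ℝ 2 G {Y : ι → ℝ | ∀ i, 0 < Y i})
    (hhom : ∀ lam : ℝ, 0 < lam → ∀ Y : ι → ℝ, (∀ i, 0 < Y i) → G (lam • Y) = lam * G Y)
    (hd1 : ∀ Y : ι → ℝ, (∀ i, 0 < Y i) → ∀ i, 0 < fderiv ℝ G Y (Pi.single i 1))
    (Y : ι → ℝ) (hY : ∀ i, 0 < Y i) : 0 < G Y := by
  have hopen : IsOpen {Y : ι → ℝ | ∀ i, 0 < Y i} := by
    have : {Y : ι → ℝ | ∀ i, 0 < Y i} = Set.univ.pi fun _ => Set.Ioi (0:ℝ) := by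
      ext x; simp [Set.mem_pi]
    rw [this]
    exact isOpen_set_pi Set.finite_univ fun i _ => isOpen_Ioi
  have hmem : {Y : ι → ℝ | ∀ i, 0 < Y i} ∈ nhds Y := hopen.mem_nhds hY
  have hdiff : DifferentiableAt ℝ G Y :=
    ((hsm.contDiffAt hmem).differentiableAt (by norm_num))
  have h1 : HasDerivAt (fun lam : ℝ => G (lam • Y)) (fderiv ℝ G Y Y) 1 := by
    have hm : HasDerivAt (fun lam : ℝ => lam • Y) Y 1 := by
      simpa using (hasDerivAt_id (1:ℝ)).smul_const Y
    have hd : HasFDerivAt G (fderiv ℝ G Y) ((1:ℝ) • Y) := by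
      rw [one_smul]; exact hdiff.hasFDerivAt
    exact hd.comp_hasDerivAt 1 hm
  have h2 : HasDerivAt (fun lam : ℝ => lam * G Y) (G Y) 1 := by
    simpa using (hasDerivAt_id (1:ℝ)).mul_const (G Y)
  have heq : (fun lam : ℝ => G (lam • Y)) =ᶠ[nhds (1:ℝ)] fun lam => lam * G Y := by
    filter_upwards [isOpen_Ioi.mem_nhds (by norm_num : (1:ℝ) ∈ Set.Ioi (0:ℝ))] with lam hlam
    exact hhom lam hlam Y hY
  have h1' : HasDerivAt (fun lam : ℝ => lam * G Y) (fderiv ℝ G Y Y) 1 :=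
    h1.congr_of_eventuallyEq heq.symm
  have key : fderiv ℝ G Y Y = G Y := h1'.unique h2
  have hsum : fderiv ℝ G Y Y = ∑ i, Y i * fderiv ℝ G Y (Pi.single i 1) := by
    have : Y = ∑ i, Y i • (Pi.single i (1:ℝ) : ι → ℝ) := by
      ext j
      simp [Pi.single_apply, Finset.sum_apply, mul_comm]
    calc fderiv ℝ G Y Y = fderiv ℝ G Y (∑ i, Y i • (Pi.single i (1:ℝ) : ι → ℝ)) := by
          rw [← this]
      _ = ∑ i, Y i * fderiv ℝ G Y (Pi.single i 1) := by
          simp [map_sum, map_smul, smul_eq_mul]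
  rw [← key, hsum]
  exact Finset.sum_pos (fun i _ => mul_pos (hY i) (hd1 Y hY i)) Finset.univ_nonempty

section aux

variable (m N : ℕ) (part : Fin m → Fin N)
    (Gn : ∀ n : Fin N, ({i : Fin m // part i = n} → ℝ) → ℝ)
    (c : Fin m → ℝ)
    (An : ∀ n : Fin N,
      Set (({i : Fin m // part i = n} → ℝ) × ({i : Fin m // part i = n} → ℝ)))

lemma GzP_pos (hpart : ∀ n : Fin N, ∃ i, part i = n)
    (hGsmooth : ∀ n, ContDiffOn ℝ 2 (Gn n)
      {Y : {i : Fin m // part i = n} → ℝ | ∀ i, 0 < Y i})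
    (hGhom : ∀ n, ∀ lam : ℝ, 0 < lam → ∀ Y : {i : Fin m // part i = n} → ℝ,
      (∀ i, 0 < Y i) → Gn n (lam • Y) = lam * Gn n Y)
    (hGd1 : ∀ n, ∀ Y : {i : Fin m // part i = n} → ℝ, (∀ i, 0 < Y i) →
      ∀ i, 0 < fderiv ℝ (Gn n) Y (Pi.single i 1))
    (n : Fin N) (z : ℝ)
    (ab : ({i : Fin m // part i = n} → ℝ) × ({i : Fin m // part i = n} → ℝ)) :
    0 < GzP m N part Gn c n z ab := by
  haveI : Nonempty {i : Fin m // part i = n} := by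
    obtain ⟨i, hi⟩ := hpart n; exact ⟨⟨i, hi⟩⟩
  exact euler_pos (Gn n) (hGsmooth n) (hGhom n) (hGd1 n) _ (fun i => Real.exp_pos _)

lemma ghat_attained
    (hGsmooth : ∀ n, ContDiffOn ℝ 2 (Gn n)
      {Y : {i : Fin m // part i = n} → ℝ | ∀ i, 0 < Y i})
    (hAne : ∀ n, (An n).Nonempty) (hAcomp : ∀ n, IsCompact (An n))
    (n : Fin N) (z : ℝ) :
    ∃ ab ∈ An n, GzP m N part Gn c n z ab = ghatP m N part Gn c An n z := by
  have hcont : ContinuousOn (GzP m N part Gn c n z) (An n) := by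
    have hinner : Continuous fun ab :
        ({i : Fin m // part i = n} → ℝ) × ({i : Fin m // part i = n} → ℝ) =>
        (fun i => Real.exp (ab.1 i - ab.2 i * (z + c i.1))) := by
      apply continuous_pi
      intro i
      exact (((continuous_apply i).comp continuous_fst).sub
        (((continuous_apply i).comp continuous_snd).mul continuous_const)).rexp
    exact (hGsmooth n).continuousOn.comp hinner.continuousOn
      (fun ab _ => fun i => Real.exp_pos _)
  obtain ⟨ab, habmem, habmin⟩ := (hAcomp n).exists_isMinOn (hAne n) hcont
  refine ⟨ab, habmem, ?_⟩
  have hleast : IsLeast (GzP m N part Gn c n z '' An n) (GzP m N part Gn c n z ab) := by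
    constructor
    · exact Set.mem_image_of_mem _ habmem
    · rintro x ⟨ab', hab', rfl⟩
      exact habmin hab'
  exact (hleast.csInf_eq).symm

end aux

/-- `z*` maximizes the robust objective `f` over `ℝ^N` if and only
if it maximizes the reduced objective `W` over `ℝ^N`. -/
theorem stmt_10
    (m N : ℕ) (hN : 1 ≤ N)
    (part : Fin m → Fin N) (hpart : ∀ n : Fin N, ∃ i, part i = n)
    (Gn : ∀ n : Fin N, ({i : Fin m // part i = n} → ℝ) → ℝ)
    (hGnonneg : ∀ n, ∀ Y : {i : Fin m // part i = n} → ℝ,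
      (∀ i, 0 < Y i) → 0 ≤ Gn n Y)
    (hGsmooth : ∀ n, ContDiffOn ℝ 2 (Gn n)
      {Y : {i : Fin m // part i = n} → ℝ | ∀ i, 0 < Y i})
    (hGhom : ∀ n, ∀ lam : ℝ, 0 < lam → ∀ Y : {i : Fin m // part i = n} → ℝ,
      (∀ i, 0 < Y i) → Gn n (lam • Y) = lam * Gn n Y)
    (hGd1 : ∀ n, ∀ Y : {i : Fin m // part i = n} → ℝ, (∀ i, 0 < Y i) →
      ∀ i, 0 < fderiv ℝ (Gn n) Y (Pi.single i 1))
    (hGd2 : ∀ n, ∀ Y : {i : Fin m // part i = n} → ℝ, (∀ i, 0 < Y i) →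
      ∀ i j, i ≠ j →
        fderiv ℝ (fun W => fderiv ℝ (Gn n) W (Pi.single i 1)) Y (Pi.single j 1) ≤ 0)
    (An : ∀ n : Fin N,
      Set (({i : Fin m // part i = n} → ℝ) × ({i : Fin m // part i = n} → ℝ)))
    (hAne : ∀ n, (An n).Nonempty) (hAconv : ∀ n, Convex ℝ (An n))
    (hAcomp : ∀ n, IsCompact (An n))
    (hAb : ∀ n, ∀ ab ∈ An n, ∃ β : ℝ, 0 < β ∧ ∀ i, ab.2 i = β)
    (c : Fin m → ℝ) (hc : ∀ i, 0 ≤ c i) :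
    ∀ zs : Fin N → ℝ,
      (∀ z : Fin N → ℝ, fP m N part Gn c An z ≤ fP m N part Gn c An zs) ↔
      (∀ z : Fin N → ℝ, WP m N part Gn c An z ≤ WP m N part Gn c An zs) := by
  classical
  -- positivity of G-values
  have hgpos : ∀ (n : Fin N) (z : ℝ) ab, 0 < GzP m N part Gn c n z ab :=
    GzP_pos m N part Gn c hpart hGsmooth hGhom hGd1
  have hattain : ∀ (n : Fin N) (z : ℝ),
      ∃ ab ∈ An n, GzP m N part Gn c n z ab = ghatP m N part Gn c An n z :=
    ghat_attained m N part Gn c An hGsmooth hAne hAcomp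
  have hghpos : ∀ (n : Fin N) (z : ℝ), 0 < ghatP m N part Gn c An n z := by
    intro n z
    obtain ⟨ab, _, hab⟩ := hattain n z
    rw [← hab]; exact hgpos n z ab
  have hbdd : ∀ (n : Fin N) (z : ℝ), BddBelow (GzP m N part Gn c n z '' An n) := by
    intro n z
    exact ⟨0, by rintro x ⟨ab, _, rfl⟩; exact (hgpos n z ab).le⟩
  have hghle : ∀ (n : Fin N) (z : ℝ) ab, ab ∈ An n →
      ghatP m N part Gn c An n z ≤ GzP m N part Gn c n z ab := by
    intro n z ab hab
    exact csInf_le (hbdd n z) (Set.mem_image_of_mem _ hab)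
  have hden : ∀ z : Fin N → ℝ, 0 < 1 + ∑ l, ghatP m N part Gn c An l (z l) := by
    intro z
    have : (0:ℝ) ≤ ∑ l, ghatP m N part Gn c An l (z l) :=
      Finset.sum_nonneg fun l _ => (hghpos l (z l)).le
    linarith
  -- algebraic expansion helper
  have expand : ∀ (w G : Fin N → ℝ) (t : ℝ),
      ∑ n, (w n - t) * G n = ∑ n, w n * G n - t * ∑ n, G n := by
    intro w G t
    rw [Finset.mul_sum, ← Finset.sum_sub_distrib]
    exact Finset.sum_congr rfl fun n _ => by ring
  -- key identity for W
  have hWkey : ∀ z : Fin N → ℝ,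
      ∑ n, (z n - WP m N part Gn c An z) * ghatP m N part Gn c An n (z n)
        = WP m N part Gn c An z := by
    intro z
    have h1 : WP m N part Gn c An z * (1 + ∑ l, ghatP m N part Gn c An l (z l))
        = ∑ n, z n * ghatP m N part Gn c An n (z n) := by
      rw [WP, div_mul_cancel₀ _ (hden z).ne']
    rw [expand]
    linarith [h1]
  -- Lemma A : f ≤ W pointwise
  have hAW : ∀ z : Fin N → ℝ, fP m N part Gn c An z ≤ WP m N part Gn c An z := by
    intro z
    choose abs habmem habeq using fun n => hattain n (z n)
    have hmemS : (fun n => abs n) ∈ {ab : ∀ n : Fin N,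
        ({i : Fin m // part i = n} → ℝ) × ({i : Fin m // part i = n} → ℝ) |
        ∀ n, ab n ∈ An n} := fun n => habmem n
    have hval : rhoP m N part Gn c z (fun n => abs n) = WP m N part Gn c An z := by
      rw [rhoP, WP]
      simp only [habeq]
    have hbddS : BddBelow (rhoP m N part Gn c z '' {ab : ∀ n : Fin N,
        ({i : Fin m // part i = n} → ℝ) × ({i : Fin m // part i = n} → ℝ) |
        ∀ n, ab n ∈ An n}) := by
      refine ⟨-(∑ n, |z n|), ?_⟩
      rintro x ⟨ab, hab, rfl⟩
      set M : ℝ := ∑ n, |z n| with hM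
      have hM0 : 0 ≤ M := Finset.sum_nonneg fun n _ => abs_nonneg _
      have hgs : (0:ℝ) ≤ ∑ n, GzP m N part Gn c n (z n) (ab n) :=
        Finset.sum_nonneg fun n _ => (hgpos n (z n) (ab n)).le
      have hdenpos : 0 < 1 + ∑ n, GzP m N part Gn c n (z n) (ab n) := by linarith
      rw [rhoP, le_div_iff₀ hdenpos]
      have hterm : ∀ n ∈ Finset.univ, -M * GzP m N part Gn c n (z n) (ab n)
          ≤ z n * GzP m N part Gn c n (z n) (ab n) := by
        intro n _
        apply mul_le_mul_of_nonneg_right _ (hgpos n (z n) (ab n)).le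
        have : |z n| ≤ M := Finset.single_le_sum
          (f := fun n => |z n|) (fun n _ => abs_nonneg _) (Finset.mem_univ n)
        linarith [neg_abs_le (z n)]
      have hsum := Finset.sum_le_sum hterm
      rw [← Finset.mul_sum] at hsum
      nlinarith
    calc fP m N part Gn c An z ≤ rhoP m N part Gn c z (fun n => abs n) :=
          csInf_le hbddS (Set.mem_image_of_mem _ hmemS)
      _ = WP m N part Gn c An z := hval
  -- termwise comparison (non-strict)
  have hterm_le : ∀ (z : Fin N → ℝ) (n : Fin N),
      (z n - WP m N part Gn c An z) * ghatP m N part Gn c An n (z n)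
        ≤ (max (z n) (WP m N part Gn c An z) - WP m N part Gn c An z) *
          ghatP m N part Gn c An n (max (z n) (WP m N part Gn c An z)) := by
    intro z n
    set t := WP m N part Gn c An z with ht
    by_cases h : t ≤ z n
    · rw [max_eq_left h]
    · have hlt : z n < t := not_le.mp h
      rw [max_eq_right hlt.le, sub_self, zero_mul]
      exact mul_nonpos_of_nonpos_of_nonneg (by linarith) (hghpos n (z n)).le
  -- Lemma B : W z ≤ f (z ⊔ W z)
  have hB : ∀ z : Fin N → ℝ,
      WP m N part Gn c An z ≤
        fP m N part Gn c An (fun n => max (z n) (WP m N part Gn c An z)) := by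
    intro z
    set t := WP m N part Gn c An z with ht
    set z' : Fin N → ℝ := fun n => max (z n) t with hz'
    have hne : (rhoP m N part Gn c z' '' {ab : ∀ n : Fin N,
        ({i : Fin m // part i = n} → ℝ) × ({i : Fin m // part i = n} → ℝ) |
        ∀ n, ab n ∈ An n}).Nonempty := by
      refine ⟨rhoP m N part Gn c z' (fun n => (hAne n).choose), ?_⟩
      exact Set.mem_image_of_mem _ (fun n => (hAne n).choose_spec)
    apply le_csInf hne
    rintro x ⟨ab, hab, rfl⟩
    have hgs : (0:ℝ) ≤ ∑ n, GzP m N part Gn c n (z' n) (ab n) :=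
      Finset.sum_nonneg fun n _ => (hgpos n (z' n) (ab n)).le
    have hdenpos : 0 < 1 + ∑ n, GzP m N part Gn c n (z' n) (ab n) := by linarith
    rw [rhoP, le_div_iff₀ hdenpos]
    -- step 2 : ĝ ≤ g with nonneg coefficient
    have step2 : ∀ n ∈ Finset.univ,
        (z' n - t) * ghatP m N part Gn c An n (z' n)
          ≤ (z' n - t) * GzP m N part Gn c n (z' n) (ab n) := by
      intro n _
      apply mul_le_mul_of_nonneg_left (hghle n (z' n) (ab n) (hab n))
      have : t ≤ z' n := le_max_right _ _
      linarith
    have step1 := Finset.sum_le_sum (fun n (_ : n ∈ Finset.univ) => hterm_le z n)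
    rw [hWkey z] at step1
    have step2' := Finset.sum_le_sum step2
    have hfin : t ≤ ∑ n, (z' n - t) * GzP m N part Gn c n (z' n) (ab n) :=
      le_trans step1 (le_trans (le_of_eq rfl) step2')
    rw [expand] at hfin
    linarith
  -- strict improvement of W if some coordinate below W z
  have hstrict : ∀ z : Fin N → ℝ, (∃ n, z n < WP m N part Gn c An z) →
      WP m N part Gn c An z <
        WP m N part Gn c An (fun n => max (z n) (WP m N part Gn c An z)) := by
    intro z ⟨n₀, hn₀⟩
    set t := WP m N part Gn c An z with ht
    set z' : Fin N → ℝ := fun n => max (z n) t with hz'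
    have hsumlt : ∑ n, (z n - t) * ghatP m N part Gn c An n (z n)
        < ∑ n, (z' n - t) * ghatP m N part Gn c An n (z' n) := by
      apply Finset.sum_lt_sum (fun n _ => hterm_le z n)
      refine ⟨n₀, Finset.mem_univ n₀, ?_⟩
      have h1 : (z n₀ - t) * ghatP m N part Gn c An n₀ (z n₀) < 0 :=
        mul_neg_of_neg_of_pos (by linarith) (hghpos n₀ (z n₀))
      rw [← ht, max_eq_right hn₀.le, sub_self, zero_mul]
      exact h1
    rw [hWkey z] at hsumlt
    have hd' := hden z'
    rw [expand] at hsumlt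
    rw [WP, lt_div_iff₀ hd']
    linarith
  -- main argument
  intro zs
  constructor
  · intro hmax z
    calc WP m N part Gn c An z
        ≤ fP m N part Gn c An (fun n => max (z n) (WP m N part Gn c An z)) := hB z
      _ ≤ fP m N part Gn c An zs := hmax _
      _ ≤ WP m N part Gn c An zs := hAW zs
  · intro hmax z
    have hzs : ∀ n, WP m N part Gn c An zs ≤ zs n := by
      by_contra h
      push_neg at h
      obtain ⟨n, hn⟩ := h
      exact absurd (hmax _) (not_le.mpr (hstrict zs ⟨n, hn⟩))
    have hz'eq : (fun n => max (zs n) (WP m N part Gn c An zs)) = zs :=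
      funext fun n => max_eq_left (hzs n)
    have hfzs : WP m N part Gn c An zs ≤ fP m N part Gn c An zs := by
      have := hB zs
      rwa [hz'eq] at this
    calc fP m N part Gn c An z ≤ WP m N part Gn c An z := hAW z
      _ ≤ WP m N part Gn c An zs := hmax z
      _ ≤ fP m N part Gn c An zs := hfzs
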